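/- Let α ∈ ℝ (possibly negative), 0 ≤ β ≤ 1, and let α₁, α₂ ∈ ℝ satisfy α₁ + α₂ = α with α₂ ∈ ℤ. Then there is a constant C = C(α, β) such that for every pair (z, h) ∈ ℂ² for which all the displayed powers are defined (in particular z ≠ 0 and z + h ≠ 0 when negative exponents occur), one has | |z+h|^{α₁}(z+h)^{α₂} − |z|^{α₁} z^{α₂} | ≤ C |h|^{β} ( |z+h|^{α−β} + |z|^{α−β} ). -/

import Mathlib

open MeasureTheory Real Set Filter
open scoped FourierTransform ENNReal NNReal Topology

noncomputable section

/-- `ℝ^d` as a Euclidean space. -/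
abbrev Rd (d : ℕ) : Type := EuclideanSpace ℝ (Fin d)

/-- The Bessel potential operator `⟨D⟩ˢ`, i.e. the Fourier multiplier with
symbol `(1 + ‖ξ‖²)^(s/2)`. -/
def besselPot (d : ℕ) (s : ℝ) (u : Rd d → ℂ) : Rd d → ℂ :=
  fun x => 𝓕⁻ (fun ξ : Rd d => ((((1 : ℝ) + ‖ξ‖ ^ 2) ^ (s / 2) : ℝ) : ℂ) * 𝓕 u ξ) x

/-- The `W^{s,q}(ℝ^d)` Bessel-potential Sobolev norm `‖⟨D⟩ˢ u‖_{L^q}`. -/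
def sobolevNorm (d : ℕ) (s q : ℝ) (u : Rd d → ℂ) : ℝ≥0∞ :=
  eLpNorm (besselPot d s u) (ENNReal.ofReal q) volume

/-- Membership in the Sobolev space `W^{s,q}(ℝ^d)`. -/
def MemSobolev (d : ℕ) (s q : ℝ) (u : Rd d → ℂ) : Prop :=
  AEStronglyMeasurable u (volume : Measure (Rd d)) ∧ sobolevNorm d s q u ≠ ⊤

/-- `u : t ↦ u t` is a continuous map from `J ⊆ ℝ` into `W^{s,q}(ℝ^d)`. -/
def ContInSobolev (d : ℕ) (s q : ℝ) (J : Set ℝ) (u : ℝ → Rd d → ℂ) : Prop :=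
  (∀ t ∈ J, MemSobolev d s q (u t)) ∧
  ∀ t ∈ J, ∀ ε : ℝ, 0 < ε → ∃ δ : ℝ, 0 < δ ∧ ∀ t' ∈ J, |t' - t| < δ →
    sobolevNorm d s q (fun x => u t' x - u t x) < ENNReal.ofReal ε

/-- The power nonlinearity `μ |z|^(p-1) z`. -/
def nlPow (p μ : ℝ) (z : ℂ) : ℂ := (μ : ℂ) * ((‖z‖ ^ (p - 1) : ℝ) : ℂ) * z

/-- The Schrödinger group `e^{-itΔ}`, as a Fourier multiplier. -/
def schrodingerGroup (d : ℕ) (t : ℝ) (u : Rd d → ℂ) : Rd d → ℂ :=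
  if t = 0 then u
  else fun x =>
    𝓕⁻ (fun ξ : Rd d => Complex.exp (Complex.I * (4 * π ^ 2 * t * ‖ξ‖ ^ 2)) * 𝓕 u ξ) x

/-- The Gaussian heat kernel `(4πt)^(-d/2) e^{-|x|²/(4t)}`. -/
def heatKernel (d : ℕ) (t : ℝ) (x : Rd d) : ℝ :=
  (4 * π * t) ^ (-(d : ℝ) / 2) * Real.exp (-‖x‖ ^ 2 / (4 * t))

/-- The heat semigroup `e^{tΔ}`, given by convolution with the Gaussian kernel. -/
def heatSemigroup (d : ℕ) (t : ℝ) (u : Rd d → ℂ) : Rd d → ℂ :=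
  if t = 0 then u else fun x => ∫ y, (heatKernel d t (x - y) : ℂ) * u y

/-- Duhamel (integral) formulation of the nonlinear Schrödinger equation
`i∂_t u - Δu = μ |u|^{p-1} u`, `u(0) = u₀`, on the time set `J`. -/
def IsNLSSolutionOn (d : ℕ) (p μ : ℝ) (u₀ : Rd d → ℂ) (J : Set ℝ) (u : ℝ → Rd d → ℂ) : Prop :=
  u 0 =ᵐ[volume] u₀ ∧
  ∀ t ∈ J, u t =ᵐ[volume] fun x =>
    schrodingerGroup d t u₀ x -
      Complex.I * ∫ s in (0:ℝ)..t, schrodingerGroup d (t - s) (fun y => nlPow p μ (u s y)) x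

/-- Duhamel (integral) formulation of the nonlinear heat equation
`∂_t u - Δu = μ |u|^{p-1} u`, `u(0) = u₀`, on the time set `J`. -/
def IsNLHSolutionOn (d : ℕ) (p μ : ℝ) (u₀ : Rd d → ℂ) (J : Set ℝ) (u : ℝ → Rd d → ℂ) : Prop :=
  u 0 =ᵐ[volume] u₀ ∧
  ∀ t ∈ J, u t =ᵐ[volume] fun x =>
    heatSemigroup d t u₀ x +
      ∫ s in (0:ℝ)..t, heatSemigroup d (t - s) (fun y => nlPow p μ (u s y)) x

/-! ### One-dimensional versions, for functions on `ℝ` -/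

/-- The one-dimensional Bessel potential operator `⟨D⟩ˢ`. -/
def besselPot1 (s : ℝ) (u : ℝ → ℂ) : ℝ → ℂ :=
  fun x => 𝓕⁻ (fun ξ : ℝ => ((((1 : ℝ) + ξ ^ 2) ^ (s / 2) : ℝ) : ℂ) * 𝓕 u ξ) x

/-- The one-dimensional `W^{s,q}(ℝ)` Sobolev norm. -/
def sobolevNorm1 (s q : ℝ) (u : ℝ → ℂ) : ℝ≥0∞ :=
  eLpNorm (besselPot1 s u) (ENNReal.ofReal q) volume

/-- Membership in `W^{s,q}(ℝ)`. -/
def MemSobolev1 (s q : ℝ) (u : ℝ → ℂ) : Prop :=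
  AEStronglyMeasurable u (volume : Measure ℝ) ∧ sobolevNorm1 s q u ≠ ⊤

/-- Continuity in time with values in `W^{s,q}(ℝ)`. -/
def ContInSobolev1 (s q : ℝ) (J : Set ℝ) (u : ℝ → ℝ → ℂ) : Prop :=
  (∀ t ∈ J, MemSobolev1 s q (u t)) ∧
  ∀ t ∈ J, ∀ ε : ℝ, 0 < ε → ∃ δ : ℝ, 0 < δ ∧ ∀ t' ∈ J, |t' - t| < δ →
    sobolevNorm1 s q (fun x => u t' x - u t x) < ENNReal.ofReal ε

/-- The one-dimensional Schrödinger group `e^{-it∂_x²}`. -/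
def schrodingerGroup1 (t : ℝ) (u : ℝ → ℂ) : ℝ → ℂ :=
  if t = 0 then u
  else fun x => 𝓕⁻ (fun ξ : ℝ => Complex.exp (Complex.I * (4 * π ^ 2 * t * ξ ^ 2)) * 𝓕 u ξ) x

/-- Duhamel formulation of the one-dimensional NLS. -/
def IsNLSSolutionOn1 (p μ : ℝ) (u₀ : ℝ → ℂ) (J : Set ℝ) (u : ℝ → ℝ → ℂ) : Prop :=
  u 0 =ᵐ[volume] u₀ ∧
  ∀ t ∈ J, u t =ᵐ[volume] fun x =>
    schrodingerGroup1 t u₀ x -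
      Complex.I * ∫ s in (0:ℝ)..t, schrodingerGroup1 (t - s) (fun y => nlPow p μ (u s y)) x

end

private lemma phb_deriv (α₁ : ℝ) (α₂ : ℤ) (w : ℂ) (hw : w ≠ 0) :
    ∃ D : ℂ →L[ℝ] ℂ,
      HasFDerivAt (fun v : ℂ => ((‖v‖ ^ α₁ : ℝ) : ℂ) * v ^ α₂) D w ∧
      ‖D‖ ≤ (|α₁| + |(α₂ : ℝ)|) * ‖w‖ ^ (α₁ + (α₂ : ℝ) - 1) := by
  have hw0 : (0:ℝ) < ‖w‖ := norm_pos_iff.mpr hw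
  have hnd : DifferentiableAt ℝ (fun v : ℂ => ‖v‖) w :=
    (contDiffAt_norm ℝ (n := 1) hw).differentiableAt one_ne_zero
  set N := fderiv ℝ (fun v : ℂ => ‖v‖) w with hN
  have hnorm : HasFDerivAt (fun v : ℂ => ‖v‖) N w := hnd.hasFDerivAt
  have hnormle : ‖N‖ ≤ 1 := by
    simpa using norm_fderiv_le_of_lipschitz ℝ (lipschitzWith_one_norm (E := ℂ)) (x₀ := w)
  have hrpow : HasDerivAt (fun r : ℝ => r ^ α₁) (α₁ * ‖w‖ ^ (α₁ - 1)) ‖w‖ :=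
    Real.hasDerivAt_rpow_const (Or.inl hw0.ne')
  have hc : HasFDerivAt (fun v : ℂ => ((‖v‖ ^ α₁ : ℝ) : ℂ))
      (Complex.ofRealCLM.comp ((α₁ * ‖w‖ ^ (α₁ - 1)) • N)) w :=
    Complex.ofRealCLM.hasFDerivAt.comp w (hrpow.comp_hasFDerivAt w hnorm)
  have hd : HasFDerivAt (fun v : ℂ => v ^ α₂)
      ((ContinuousLinearMap.smulRight (1 : ℂ →L[ℂ] ℂ)
        ((α₂:ℂ) * w ^ (α₂ - 1))).restrictScalars ℝ) w :=
    ((hasDerivAt_zpow α₂ w (Or.inl hw)).hasFDerivAt).restrictScalars ℝ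
  refine ⟨_, hc.mul hd, ?_⟩
  have e1 : (‖w‖:ℝ) ^ ((α₂ - 1 : ℤ)) = ‖w‖ ^ ((α₂:ℝ) - 1) := by
    rw [← Real.rpow_intCast]; push_cast; ring_nf
  have e2 : (‖w‖:ℝ) ^ ((α₂ : ℤ)) = ‖w‖ ^ ((α₂:ℝ)) := by
    rw [← Real.rpow_intCast]
  have key : ‖w‖ ^ α₁ * (|(α₂:ℝ)| * ‖w‖ ^ ((α₂:ℝ) - 1)) + ‖w‖ ^ ((α₂:ℝ)) * (|α₁| * ‖w‖ ^ (α₁ - 1))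
      = (|α₁| + |(α₂:ℝ)|) * ‖w‖ ^ (α₁ + (α₂ : ℝ) - 1) := by
    have r1 : ‖w‖ ^ α₁ * ‖w‖ ^ ((α₂:ℝ) - 1) = ‖w‖ ^ (α₁ + (α₂:ℝ) - 1) := by
      rw [← Real.rpow_add hw0]; ring_nf
    have r2 : ‖w‖ ^ ((α₂:ℝ)) * ‖w‖ ^ (α₁ - 1) = ‖w‖ ^ (α₁ + (α₂:ℝ) - 1) := by
      rw [← Real.rpow_add hw0]; ring_nf
    linear_combination |(α₂:ℝ)| * r1 + |α₁| * r2
  have n1 : ‖((‖w‖ ^ α₁ : ℝ) : ℂ) • ((ContinuousLinearMap.smulRight (1 : ℂ →L[ℂ] ℂ)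
        ((α₂:ℂ) * w ^ (α₂ - 1))).restrictScalars ℝ)‖
      ≤ ‖w‖ ^ α₁ * (|(α₂:ℝ)| * ‖w‖ ^ ((α₂:ℝ) - 1)) := by
    refine le_trans (ContinuousLinearMap.opNorm_smul_le _ _) (le_of_eq ?_)
    rw [Complex.norm_real, Real.norm_eq_abs, abs_of_nonneg (Real.rpow_nonneg hw0.le _),
      ContinuousLinearMap.norm_restrictScalars, ContinuousLinearMap.norm_smulRight_apply,
      norm_one, one_mul, norm_mul, Complex.norm_intCast, norm_zpow, e1]
  have n2 : ‖(w ^ α₂) • (Complex.ofRealCLM.comp ((α₁ * ‖w‖ ^ (α₁ - 1)) • N))‖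
      ≤ ‖w‖ ^ ((α₂:ℝ)) * (|α₁| * ‖w‖ ^ (α₁ - 1)) := by
    refine le_trans (ContinuousLinearMap.opNorm_smul_le _ _) ?_
    rw [norm_zpow, e2]
    refine mul_le_mul_of_nonneg_left ?_ (Real.rpow_nonneg hw0.le _)
    calc ‖Complex.ofRealCLM.comp ((α₁ * ‖w‖ ^ (α₁ - 1)) • N)‖
        ≤ ‖(Complex.ofRealCLM : ℝ →L[ℝ] ℂ)‖ * ‖(α₁ * ‖w‖ ^ (α₁ - 1)) • N‖ :=
          ContinuousLinearMap.opNorm_comp_le _ _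
      _ ≤ 1 * (|α₁ * ‖w‖ ^ (α₁ - 1)| * 1) := by
          refine mul_le_mul Complex.ofRealCLM_norm.le ?_ (norm_nonneg _) zero_le_one
          refine le_trans (ContinuousLinearMap.opNorm_smul_le _ _) ?_
          rw [Real.norm_eq_abs]
          exact mul_le_mul_of_nonneg_left hnormle (abs_nonneg _)
      _ ≤ |α₁| * ‖w‖ ^ (α₁ - 1) := by
          rw [one_mul, mul_one, abs_mul, abs_of_nonneg (Real.rpow_nonneg hw0.le _)]
  calc _ ≤ _ + _ := norm_add_le _ _
    _ ≤ ‖w‖ ^ α₁ * (|(α₂:ℝ)| * ‖w‖ ^ ((α₂:ℝ) - 1)) + ‖w‖ ^ ((α₂:ℝ)) * (|α₁| * ‖w‖ ^ (α₁ - 1)) :=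
        add_le_add n1 n2
    _ = _ := key

private lemma phb_comparable {a b : ℝ} (ha : 0 < a) (hb : 0 < b)
    (h1 : a / 2 ≤ b) (h2 : b ≤ 2 * a) (γ : ℝ) : b ^ γ ≤ 2 ^ |γ| * a ^ γ := by
  have hs : (0:ℝ) < b / a := div_pos hb ha
  have hs1 : (1:ℝ)/2 ≤ b / a := by rw [div_le_div_iff₀ (by norm_num) ha]; linarith
  have hs2 : b / a ≤ 2 := by rw [div_le_iff₀ ha]; linarith
  have hmain : (b / a) ^ γ ≤ 2 ^ |γ| := by
    rcases le_or_gt 0 γ with hγ | hγ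
    · calc (b / a) ^ γ ≤ 2 ^ γ := Real.rpow_le_rpow hs.le hs2 hγ
        _ ≤ 2 ^ |γ| := Real.rpow_le_rpow_of_exponent_le one_le_two (le_abs_self γ)
    · have hinv : (b / a)⁻¹ ≤ 2 := by
        rw [inv_le_comm₀ hs (by norm_num)]; linarith
      have : (b / a) ^ γ = ((b / a)⁻¹) ^ (-γ) := by
        rw [Real.inv_rpow hs.le, Real.rpow_neg hs.le, inv_inv]
      rw [this, abs_of_neg hγ]
      exact Real.rpow_le_rpow (inv_nonneg.mpr hs.le) hinv (by linarith)
  calc b ^ γ = (b / a) ^ γ * a ^ γ := by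
        rw [← Real.mul_rpow hs.le ha.le, div_mul_cancel₀ _ ha.ne']
    _ ≤ 2 ^ |γ| * a ^ γ := mul_le_mul_of_nonneg_right hmain (Real.rpow_nonneg ha.le _)


/-- (Precise Hölder bound.) Let `α ∈ ℝ`, `0 ≤ β ≤ 1`, and
`α₁ + α₂ = α` with `α₂ ∈ ℤ`. Then there is `C = C(α, β) > 0` such that for every
`(z, h) ∈ ℂ²` with `z ≠ 0` and `z + h ≠ 0` (so that all displayed powers are defined),
`| |z+h|^{α₁}(z+h)^{α₂} - |z|^{α₁} z^{α₂} | ≤ C |h|^β (|z+h|^{α-β} + |z|^{α-β})`. -/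
theorem precise_holder_bound
    (α β α₁ : ℝ) (α₂ : ℤ) (hβ₀ : 0 ≤ β) (hβ₁ : β ≤ 1) (hsum : α₁ + (α₂ : ℝ) = α) :
    ∃ C : ℝ, 0 < C ∧ ∀ z h : ℂ, z ≠ 0 → z + h ≠ 0 →
      ‖((‖z + h‖ ^ α₁ : ℝ) : ℂ) * (z + h) ^ α₂ - ((‖z‖ ^ α₁ : ℝ) : ℂ) * z ^ α₂‖ ≤
        C * ‖h‖ ^ β * (‖z + h‖ ^ (α - β) + ‖z‖ ^ (α - β)) := by
  
  subst hsum
  set A : ℝ := α₁ + (α₂ : ℝ) with hA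
  set M : ℝ := (|α₁| + |(α₂:ℝ)|) * 2 ^ |A - 1| with hM
  have hM0 : 0 ≤ M := by positivity
  refine ⟨M + 3, by positivity, ?_⟩
  intro z h hz hzh
  have hz0 : (0:ℝ) < ‖z‖ := norm_pos_iff.mpr hz
  have hzh0 : (0:ℝ) < ‖z + h‖ := norm_pos_iff.mpr hzh
  have hQP : (0:ℝ) ≤ ‖z + h‖ ^ (A - β) + ‖z‖ ^ (A - β) := by positivity
  by_cases hh0 : h = 0
  · subst hh0
    simp only [add_zero, sub_self, norm_zero]
    positivity
  have hh : (0:ℝ) < ‖h‖ := norm_pos_iff.mpr hh0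
  have hβpow : (0:ℝ) ≤ ‖h‖ ^ β := Real.rpow_nonneg hh.le _
  have normf : ∀ w : ℂ, 0 < ‖w‖ → ‖((‖w‖ ^ α₁ : ℝ) : ℂ) * w ^ α₂‖ = ‖w‖ ^ A := by
    intro w hw0
    rw [norm_mul, Complex.norm_real, Real.norm_eq_abs,
      abs_of_nonneg (Real.rpow_nonneg hw0.le _), norm_zpow,
      ← Real.rpow_intCast ‖w‖ α₂, ← Real.rpow_add hw0]
  by_cases hcase : ‖h‖ ≤ ‖z‖ / 2
  · -- mean value case
    set s : Set ℂ := segment ℝ z (z + h) with hs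
    have hseg : ∀ x ∈ s, ‖z‖ / 2 ≤ ‖x‖ ∧ ‖x‖ ≤ 2 * ‖z‖ := by
      intro x hx
      rw [hs, segment_eq_image] at hx
      obtain ⟨θ, hθ, rfl⟩ := hx
      have hd : ‖(1 - θ) • z + θ • (z + h) - z‖ ≤ ‖h‖ := by
        have : (1 - θ) • z + θ • (z + h) - z = θ • h := by
          simp [sub_smul, smul_add]; ring
        rw [this, norm_smul, Real.norm_eq_abs, abs_of_nonneg hθ.1]
        exact mul_le_of_le_one_left hh.le hθ.2
      constructor
      · have h1 := norm_sub_norm_le z ((1 - θ) • z + θ • (z + h))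
        rw [norm_sub_rev] at h1
        linarith
      · have := norm_le_norm_add_norm_sub' ((1 - θ) • z + θ • (z + h)) z
        linarith
    have hkey : ∀ x ∈ s, HasFDerivWithinAt
        (fun v : ℂ => ((‖v‖ ^ α₁ : ℝ) : ℂ) * v ^ α₂)
        (fderiv ℝ (fun v : ℂ => ((‖v‖ ^ α₁ : ℝ) : ℂ) * v ^ α₂) x) s x ∧
        ‖fderiv ℝ (fun v : ℂ => ((‖v‖ ^ α₁ : ℝ) : ℂ) * v ^ α₂) x‖ ≤ M * ‖z‖ ^ (A - 1) := by
      intro x hx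
      obtain ⟨hx1, hx2⟩ := hseg x hx
      have hx0 : x ≠ 0 := by
        intro hx0; rw [hx0, norm_zero] at hx1; linarith
      obtain ⟨D, hD, hDle⟩ := phb_deriv α₁ α₂ x hx0
      rw [hD.fderiv]
      refine ⟨hD.hasFDerivWithinAt, le_trans hDle ?_⟩
      have := phb_comparable hz0 (norm_pos_iff.mpr hx0) hx1 hx2 (A - 1)
      calc (|α₁| + |(α₂:ℝ)|) * ‖x‖ ^ (α₁ + (α₂:ℝ) - 1)
          ≤ (|α₁| + |(α₂:ℝ)|) * (2 ^ |A - 1| * ‖z‖ ^ (A - 1)) :=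
            mul_le_mul_of_nonneg_left this (by positivity)
        _ = M * ‖z‖ ^ (A - 1) := by rw [hM]; ring
    have hmvt := Convex.norm_image_sub_le_of_norm_hasFDerivWithin_le
      (fun x hx => (hkey x hx).1) (fun x hx => (hkey x hx).2)
      (convex_segment z (z + h)) (left_mem_segment ℝ z (z + h))
      (right_mem_segment ℝ z (z + h))
    have hsimp : ‖z + h - z‖ = ‖h‖ := by rw [add_sub_cancel_left]
    rw [hsimp] at hmvt
    -- now chain
    have h1b : ‖h‖ ^ β * ‖h‖ ^ (1 - β) = ‖h‖ := by
      rw [← Real.rpow_add hh]; norm_num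
    have h2b : ‖h‖ ^ (1 - β) ≤ ‖z‖ ^ (1 - β) :=
      Real.rpow_le_rpow hh.le (by linarith) (by linarith)
    have h3b : ‖z‖ ^ (A - 1) * ‖z‖ ^ (1 - β) = ‖z‖ ^ (A - β) := by
      rw [← Real.rpow_add hz0]; ring_nf
    calc ‖((‖z + h‖ ^ α₁ : ℝ) : ℂ) * (z + h) ^ α₂ - ((‖z‖ ^ α₁ : ℝ) : ℂ) * z ^ α₂‖
        ≤ M * ‖z‖ ^ (A - 1) * ‖h‖ := hmvt
      _ = M * ‖h‖ ^ β * (‖z‖ ^ (A - 1) * ‖h‖ ^ (1 - β)) := by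
          linear_combination (-(M * ‖z‖ ^ (A - 1))) * h1b
      _ ≤ M * ‖h‖ ^ β * (‖z‖ ^ (A - 1) * ‖z‖ ^ (1 - β)) := by
          refine mul_le_mul_of_nonneg_left (mul_le_mul_of_nonneg_left h2b ?_) (by positivity)
          exact Real.rpow_nonneg hz0.le _
      _ = M * ‖h‖ ^ β * ‖z‖ ^ (A - β) := by rw [h3b]
      _ ≤ (M + 3) * ‖h‖ ^ β * (‖z + h‖ ^ (A - β) + ‖z‖ ^ (A - β)) := by
          have hp : (0:ℝ) ≤ ‖z + h‖ ^ (A - β) := Real.rpow_nonneg hzh0.le _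
          have hq : (0:ℝ) ≤ ‖z‖ ^ (A - β) := Real.rpow_nonneg hz0.le _
          nlinarith [mul_nonneg hβpow hq, mul_nonneg hβpow hp]
  · -- far case: ‖z‖ < 2‖h‖
    push_neg at hcase
    have hz2h : ‖z‖ < 2 * ‖h‖ := by linarith
    have hzh3h : ‖z + h‖ ≤ 3 * ‖h‖ := by
      have := norm_add_le z h; linarith
    have t1 : ‖z‖ ^ A = ‖z‖ ^ β * ‖z‖ ^ (A - β) := by
      rw [← Real.rpow_add hz0]; ring_nf
    have t2 : ‖z + h‖ ^ A = ‖z + h‖ ^ β * ‖z + h‖ ^ (A - β) := by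
      rw [← Real.rpow_add hzh0]; ring_nf
    have b1 : ‖z‖ ^ β ≤ 2 * ‖h‖ ^ β := by
      calc ‖z‖ ^ β ≤ (2 * ‖h‖) ^ β := Real.rpow_le_rpow hz0.le hz2h.le hβ₀
        _ = 2 ^ β * ‖h‖ ^ β := Real.mul_rpow (by norm_num) hh.le
        _ ≤ 2 * ‖h‖ ^ β := by
            refine mul_le_mul_of_nonneg_right ?_ hβpow
            calc (2:ℝ) ^ β ≤ 2 ^ (1:ℝ) :=
                  Real.rpow_le_rpow_of_exponent_le one_le_two hβ₁
              _ = 2 := Real.rpow_one 2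
    have b2 : ‖z + h‖ ^ β ≤ 3 * ‖h‖ ^ β := by
      calc ‖z + h‖ ^ β ≤ (3 * ‖h‖) ^ β := Real.rpow_le_rpow hzh0.le hzh3h hβ₀
        _ = 3 ^ β * ‖h‖ ^ β := Real.mul_rpow (by norm_num) hh.le
        _ ≤ 3 * ‖h‖ ^ β := by
            refine mul_le_mul_of_nonneg_right ?_ hβpow
            calc (3:ℝ) ^ β ≤ 3 ^ (1:ℝ) :=
                  Real.rpow_le_rpow_of_exponent_le (by norm_num) hβ₁
              _ = 3 := Real.rpow_one 3
    have hp : (0:ℝ) ≤ ‖z + h‖ ^ (A - β) := Real.rpow_nonneg hzh0.le _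
    have hq : (0:ℝ) ≤ ‖z‖ ^ (A - β) := Real.rpow_nonneg hz0.le _
    calc ‖((‖z + h‖ ^ α₁ : ℝ) : ℂ) * (z + h) ^ α₂ - ((‖z‖ ^ α₁ : ℝ) : ℂ) * z ^ α₂‖
        ≤ ‖((‖z + h‖ ^ α₁ : ℝ) : ℂ) * (z + h) ^ α₂‖ + ‖((‖z‖ ^ α₁ : ℝ) : ℂ) * z ^ α₂‖ :=
          norm_sub_le _ _
      _ = ‖z + h‖ ^ A + ‖z‖ ^ A := by rw [normf _ hzh0, normf _ hz0]
      _ ≤ 3 * ‖h‖ ^ β * ‖z + h‖ ^ (A - β) + 2 * ‖h‖ ^ β * ‖z‖ ^ (A - β) := by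
          rw [t1, t2]
          exact add_le_add (mul_le_mul_of_nonneg_right b2 hp)
            (mul_le_mul_of_nonneg_right b1 hq)
      _ ≤ (M + 3) * ‖h‖ ^ β * (‖z + h‖ ^ (A - β) + ‖z‖ ^ (A - β)) := by
          nlinarith [mul_nonneg hβpow hq, mul_nonneg hβpow hp,
            mul_nonneg (mul_nonneg hM0 hβpow) hp, mul_nonneg (mul_nonneg hM0 hβpow) hq]
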